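/- For the polynomials G_{q+1}(x) = ∫₀ˣ P_q(t) dt with q ≥ 2 and any natural number ℓ, one has ∫₀¹ G_{q+1}(x) P'_ℓ(x) dx = -δ_{ℓq}/(2q+1); moreover ∫₀¹ G_1(x) P'_ℓ(x) dx = 1 for all ℓ ≥ 1, where G_1(x) = x. -/

import Mathlib

open Polynomial intervalIntegral MeasureTheory

/-- The shifted Legendre polynomial on `[0,1]`, `P_q(x) = (1/q!) dᵠ/dxᵠ [xᵠ(x-1)ᵠ]`. -/
noncomputable def legP (q : ℕ) : Polynomial ℝ :=
  (q.factorial : ℝ)⁻¹ • (Polynomial.derivative^[q] (Polynomial.X ^ q * (Polynomial.X - 1) ^ q))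

/-- `G_q(x) = ∫₀ˣ P_{q-1}(t) dt`. -/
noncomputable def legG (q : ℕ) (x : ℝ) : ℝ :=
  ∫ t in (0:ℝ)..x, (legP (q - 1)).eval t

noncomputable def legF (q : ℕ) : Polynomial ℝ := Polynomial.X ^ q * (Polynomial.X - 1) ^ q

lemma legF_eval_zero {q m : ℕ} (hm : m < q) : (Polynomial.derivative^[m] (legF q)).eval 0 = 0 := by
  obtain ⟨r, hr⟩ := Polynomial.pow_sub_dvd_iterate_derivative_of_pow_dvd (q := (X : ℝ[X])) m
    (dvd_mul_right _ _ : (X:ℝ[X])^q ∣ legF q)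
  unfold legF
  rw [hr]
  have : q - m ≠ 0 := Nat.sub_ne_zero_of_lt hm
  simp [this]

lemma legF_eval_one {q m : ℕ} (hm : m < q) : (Polynomial.derivative^[m] (legF q)).eval 1 = 0 := by
  have hd : ((X:ℝ[X]) - 1)^q ∣ legF q := dvd_mul_left _ _
  obtain ⟨r, hr⟩ := Polynomial.pow_sub_dvd_iterate_derivative_of_pow_dvd (q := ((X:ℝ[X]) - 1)) m hd
  rw [hr]
  have : q - m ≠ 0 := Nat.sub_ne_zero_of_lt hm
  simp [this, zero_pow]

lemma polyII (p : ℝ[X]) (a b : ℝ) : IntervalIntegrable (fun x => p.eval x) volume a b :=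
  p.continuous.intervalIntegrable a b

lemma ibp_poly (p g : ℝ[X]) :
    ∫ x in (0:ℝ)..1, (Polynomial.derivative p).eval x * g.eval x
      = p.eval 1 * g.eval 1 - p.eval 0 * g.eval 0
        - ∫ x in (0:ℝ)..1, p.eval x * (Polynomial.derivative g).eval x := by
  have h := intervalIntegral.integral_mul_deriv_eq_deriv_mul
    (u := fun x => g.eval x) (v := fun x => p.eval x)
    (u' := fun x => (Polynomial.derivative g).eval x)
    (v' := fun x => (Polynomial.derivative p).eval x)
    (fun x _ => g.hasDerivAt x) (fun x _ => p.hasDerivAt x) (polyII _ 0 1) (polyII _ 0 1)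
  simp only [mul_comm] at h ⊢
  rw [h]

lemma ibp_iter (p : ℝ[X]) (k : ℕ)
    (h0 : ∀ m < k, (Polynomial.derivative^[m] p).eval 0 = 0)
    (h1 : ∀ m < k, (Polynomial.derivative^[m] p).eval 1 = 0) (g : ℝ[X]) :
    ∫ x in (0:ℝ)..1, (Polynomial.derivative^[k] p).eval x * g.eval x
      = (-1)^k * ∫ x in (0:ℝ)..1, p.eval x * (Polynomial.derivative^[k] g).eval x := by
  induction k generalizing g with
  | zero => simp
  | succ k ih =>
    rw [Function.iterate_succ_apply']
    rw [ibp_poly (Polynomial.derivative^[k] p) g]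
    rw [h0 k (Nat.lt_succ_self k), h1 k (Nat.lt_succ_self k)]
    rw [ih (fun m hm => h0 m (hm.trans (Nat.lt_succ_self k)))
        (fun m hm => h1 m (hm.trans (Nat.lt_succ_self k))) (Polynomial.derivative g)]
    rw [← Function.iterate_succ_apply]
    ring

lemma beta_poly (a b : ℕ) : ∫ x in (0:ℝ)..1, x^a * (x-1)^b
    = (-1)^b * (a.factorial : ℝ) * b.factorial / (a+b+1).factorial := by
  induction b generalizing a with
  | zero =>
    simp only [pow_zero, mul_one]
    rw [integral_pow, Nat.add_zero, Nat.factorial_succ, Nat.factorial_zero]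
    have ha : (a:ℝ) + 1 ≠ 0 := by positivity
    have ha' : (a.factorial:ℝ) ≠ 0 := by positivity
    push_cast
    field_simp
    simp
  | succ b ih =>
    have hu : ∀ x ∈ Set.uIcc (0:ℝ) 1, HasDerivAt (fun x : ℝ => x^(a+1)/(a+1)) (x^a) x := by
      intro x _
      have := (hasDerivAt_pow (a+1) x).div_const ((a:ℝ)+1)
      simp only [Nat.cast_add, Nat.cast_one, Nat.add_sub_cancel] at this
      have ha : (a:ℝ) + 1 ≠ 0 := by positivity
      rwa [mul_div_cancel_left₀ _ ha] at this
    have hv : ∀ x ∈ Set.uIcc (0:ℝ) 1, HasDerivAt (fun x : ℝ => (x-1)^(b+1))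
        (((b:ℝ)+1) * (x-1)^b) x := by
      intro x _
      have := (((hasDerivAt_id x).sub_const 1).fun_pow (b+1))
      simpa using this
    have h := intervalIntegral.integral_mul_deriv_eq_deriv_mul hu hv
      ((continuous_pow a).intervalIntegrable 0 1)
      (by apply Continuous.intervalIntegrable; continuity)
    simp only [one_pow, sub_self, zero_pow (Nat.succ_ne_zero b), mul_zero, zero_pow,
      ne_eq, Nat.succ_ne_zero, not_false_iff] at h
    -- h : ∫ x in 0..1, x^(a+1)/(a+1) * ((b+1)*(x-1)^b) = 0 - 0 - ∫ x^a * (x-1)^(b+1) (roughly)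
    have hrw : ∀ x : ℝ, x ^ (a + 1) / (↑a + 1) * ((↑b + 1) * (x - 1) ^ b)
        = (((b:ℝ)+1)/((a:ℝ)+1)) * (x ^ (a+1) * (x - 1) ^ b) := by
      intro x; ring
    simp only [hrw, intervalIntegral.integral_const_mul, ih (a+1)] at h
    norm_num at h
    have h2 : ∫ (x : ℝ) in (0:ℝ)..1, x ^ a * (x - 1) ^ (b + 1)
        = - ((((b:ℝ)+1)/((a:ℝ)+1)) * ((-1) ^ b * ↑(a+1).factorial * ↑b.factorial / ↑(a + 1 + b + 1).factorial)) := by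
      linarith [h]
    rw [h2, Nat.factorial_succ (a+1+b), Nat.factorial_succ b, Nat.factorial_succ a]
    have e1 : a + (b+1) + 1 = (a+1+b)+1 := by ring
    rw [e1, Nat.factorial_succ (a+1+b)]
    have ha : (a:ℝ) + 1 ≠ 0 := by positivity
    have hb : ((a+1+b:ℕ):ℝ) + 1 ≠ 0 := by positivity
    have hf1 : ((a+1+b).factorial:ℝ) ≠ 0 := by positivity
    push_cast
    field_simp
    ring

lemma legF_monic (q : ℕ) : (legF q).Monic := by
  have h : ((X:ℝ[X]) - 1) = X - C 1 := by rw [Polynomial.C_1]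
  rw [legF, h]
  exact (monic_X_pow q).mul ((monic_X_sub_C 1).pow q)

lemma legF_natDegree (q : ℕ) : (legF q).natDegree = 2 * q := by
  have : ((X:ℝ[X]) - 1) = X - C 1 := by rw [Polynomial.C_1]
  rw [legF, this, Polynomial.natDegree_mul (by exact pow_ne_zero _ X_ne_zero)
    (pow_ne_zero _ (X_sub_C_ne_zero 1))]
  have h1 : ((X:ℝ[X]) - C 1).natDegree = 1 := natDegree_X_sub_C 1
  rw [natDegree_pow, natDegree_pow, natDegree_X, h1]
  ring

lemma iterate_derivative_legF_self (q : ℕ) :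
    Polynomial.derivative^[2*q] (legF q) = Polynomial.C (((2*q).factorial : ℝ)) := by
  have hdeg : (Polynomial.derivative^[2*q] (legF q)).natDegree = 0 := by
    have := Polynomial.natDegree_iterate_derivative (legF q) (2*q)
    rw [legF_natDegree, Nat.sub_self] at this
    omega
  rw [Polynomial.eq_C_of_natDegree_eq_zero hdeg]
  congr 1
  rw [Polynomial.coeff_iterate_derivative]
  simp only [Nat.zero_add, Nat.descFactorial_self]
  have hc : (legF q).coeff (2*q) = 1 := by
    have := (legF_monic q).leadingCoeff
    rwa [Polynomial.leadingCoeff, legF_natDegree] at this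
  rw [hc]
  simp

lemma legF_integral_off {q l : ℕ} (h : l < q) :
    ∫ x in (0:ℝ)..1, (Polynomial.derivative^[q] (legF q)).eval x
      * (Polynomial.derivative^[l] (legF l)).eval x = 0 := by
  rw [ibp_iter (legF q) q (fun m hm => legF_eval_zero hm) (fun m hm => legF_eval_one hm) _]
  rw [← Function.iterate_add_apply]
  have hz : Polynomial.derivative^[q + l] (legF l) = 0 :=
    Polynomial.iterate_derivative_eq_zero (by rw [legF_natDegree]; omega)
  rw [hz]
  simp

lemma legF_integral_self (q : ℕ) :
    ∫ x in (0:ℝ)..1, (Polynomial.derivative^[q] (legF q)).eval x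
      * (Polynomial.derivative^[q] (legF q)).eval x
      = ((q.factorial:ℝ))^2 / (2*(q:ℝ)+1) := by
  rw [ibp_iter (legF q) q (fun m hm => legF_eval_zero hm) (fun m hm => legF_eval_one hm) _]
  rw [← Function.iterate_add_apply]
  have h2 : q + q = 2*q := by ring
  rw [h2, iterate_derivative_legF_self]
  have hrw : ∀ x:ℝ, (legF q).eval x * (Polynomial.C ((2*q).factorial:ℝ)).eval x
      = ((2*q).factorial:ℝ) * (x^q * (x-1)^q) := by
    intro x; simp [legF]; ring
  simp only [hrw, intervalIntegral.integral_const_mul, beta_poly]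
  have e : q + q + 1 = (2*q) + 1 := by ring
  rw [e, Nat.factorial_succ]
  have h1 : ((2*q).factorial:ℝ) ≠ 0 := by positivity
  have h3 : (2*(q:ℝ)+1) ≠ 0 := by positivity
  rcases Nat.even_or_odd q with hpar | hpar
  · rw [hpar.neg_one_pow]
    push_cast
    field_simp
  · rw [hpar.neg_one_pow]
    push_cast
    field_simp

lemma legP_eval_one (l : ℕ) : (legP l).eval 1 = 1 := by
  rw [legP]
  have h : ((X:ℝ[X]) - 1) = X - C 1 := by rw [Polynomial.C_1]
  rw [h, Polynomial.iterate_derivative_mul, Polynomial.eval_smul]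
  rw [Polynomial.eval_finset_sum]
  rw [Finset.sum_eq_single_of_mem l (Finset.self_mem_range_succ l)]
  · rw [Nat.choose_self, Nat.sub_self, Function.iterate_zero_apply,
      Polynomial.iterate_derivative_X_sub_pow_self]
    simp [smul_eq_mul]
    exact inv_mul_cancel₀ (show (l.factorial:ℝ) ≠ 0 by positivity)
  · intro k hk hkl
    rw [Polynomial.iterate_derivative_X_sub_pow]
    have hlk : l - k ≠ 0 := Nat.sub_ne_zero_of_lt (lt_of_le_of_ne
      (Nat.lt_succ_iff.mp (Finset.mem_range.mp hk)) hkl)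
    simp [zero_pow hlk]

lemma legP_ortho (q l : ℕ) :
    ∫ x in (0:ℝ)..1, (legP q).eval x * (legP l).eval x
      = if l = q then 1/(2*(q:ℝ)+1) else 0 := by
  have base : ∀ x:ℝ, (legP q).eval x * (legP l).eval x
      = (q.factorial:ℝ)⁻¹ * (l.factorial:ℝ)⁻¹
        * ((Polynomial.derivative^[q] (legF q)).eval x
           * (Polynomial.derivative^[l] (legF l)).eval x) := by
    intro x; rw [legP, legP]; simp [legF]; ring
  simp only [base, intervalIntegral.integral_const_mul]
  rcases lt_trichotomy l q with hlt | heq | hgt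
  · rw [legF_integral_off hlt, if_neg (Nat.ne_of_lt hlt)]
    ring
  · subst heq
    rw [legF_integral_self, if_pos rfl]
    have h1 : (l.factorial:ℝ) ≠ 0 := by positivity
    have h3 : (2*(l:ℝ)+1) ≠ 0 := by positivity
    field_simp
  · have hcomm : Set.EqOn
        (fun x:ℝ => (Polynomial.derivative^[q] (legF q)).eval x
          * (Polynomial.derivative^[l] (legF l)).eval x)
        (fun x:ℝ => (Polynomial.derivative^[l] (legF l)).eval x
          * (Polynomial.derivative^[q] (legF q)).eval x) (Set.uIcc 0 1) := by
      intro x _; ring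
    rw [intervalIntegral.integral_congr hcomm, legF_integral_off hgt,
      if_neg (Nat.ne_of_gt hgt)]
    ring

lemma legP_integral {l : ℕ} (hl : 1 ≤ l) : ∫ x in (0:ℝ)..1, (legP l).eval x = 0 := by
  have base : ∀ x:ℝ, (legP l).eval x
      = (l.factorial:ℝ)⁻¹ * ((Polynomial.derivative^[l] (legF l)).eval x
          * (1:ℝ[X]).eval x) := by
    intro x; rw [legP]; simp; exact Or.inl rfl
  simp only [base, intervalIntegral.integral_const_mul]
  rw [ibp_iter (legF l) l (fun m hm => legF_eval_zero hm) (fun m hm => legF_eval_one hm) 1]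
  have hz : Polynomial.derivative^[l] (1:ℝ[X]) = 0 :=
    Polynomial.iterate_derivative_eq_zero (by simp; omega)
  rw [hz]
  simp

lemma legG_hasDerivAt (q : ℕ) (x : ℝ) :
    HasDerivAt (legG (q+1)) ((legP q).eval x) x := by
  have h : legG (q+1) = fun u => ∫ t in (0:ℝ)..u, (legP q).eval t := rfl
  rw [h]
  exact intervalIntegral.integral_hasDerivAt_right
    (polyII _ 0 x) ((legP q).continuous.stronglyMeasurableAtFilter _ _)
    (legP q).continuous.continuousAt

theorem legG_legendre_deriv_biorthogonality :
    (∀ q l : ℕ, 2 ≤ q →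
      ∫ x in (0:ℝ)..1, legG (q + 1) x * (Polynomial.derivative (legP l)).eval x =
        -(if l = q then 1 / (2 * (q : ℝ) + 1) else 0)) ∧
    (∀ l : ℕ, 1 ≤ l →
      ∫ x in (0:ℝ)..1, legG 1 x * (Polynomial.derivative (legP l)).eval x = 1) := by
  constructor
  · intro q l hq
    have h := intervalIntegral.integral_mul_deriv_eq_deriv_mul
      (u := legG (q+1)) (v := fun x => (legP l).eval x)
      (u' := fun x => (legP q).eval x)
      (v' := fun x => (Polynomial.derivative (legP l)).eval x)
      (fun x _ => legG_hasDerivAt q x) (fun x _ => (legP l).hasDerivAt x)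
      (polyII _ 0 1) (polyII _ 0 1)
    rw [h]
    have hG0 : legG (q+1) 0 = 0 := intervalIntegral.integral_same
    have hG1 : legG (q+1) 1 = 0 := by
      have : legG (q+1) 1 = ∫ x in (0:ℝ)..1, (legP q).eval x := rfl
      rw [this]
      exact legP_integral (le_trans one_le_two hq)
    rw [hG0, hG1, legP_ortho q l]
    ring
  · intro l hl
    have hP0 : ∀ t:ℝ, (legP 0).eval t = 1 := by intro t; rw [legP]; simp
    have hG1 : ∀ x ∈ Set.uIcc (0:ℝ) 1, legG 1 x = x := by
      intro x _
      rw [legG]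
      simp [hP0]
    rw [intervalIntegral.integral_congr
      (g := fun x => x * (Polynomial.derivative (legP l)).eval x)
      (fun x hx => by rw [hG1 x hx])]
    have h := intervalIntegral.integral_mul_deriv_eq_deriv_mul
      (u := fun x:ℝ => x) (v := fun x => (legP l).eval x)
      (u' := fun _ => (1:ℝ))
      (v' := fun x => (Polynomial.derivative (legP l)).eval x)
      (fun x _ => hasDerivAt_id x) (fun x _ => (legP l).hasDerivAt x)
      (intervalIntegrable_const) (polyII _ 0 1)
    rw [h]
    simp only [one_mul, zero_mul]
    rw [legP_eval_one, legP_integral hl]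
    norm_num
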